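/- Let r = 3 and 2βμ ≥ 1. Then G(u) = μAu + B(u) + βC(u) is globally monotone: ⟨G(u₁)-G(u₂), u₁-u₂⟩ ≥ 0 for all u₁, u₂ ∈ V ∩ L⁴. -/

import Mathlib

open MeasureTheory Real
noncomputable section

/-- Euclidean 3-space, used both as the periodic box parametrization and target. -/
abbrev E3 := EuclideanSpace ℝ (Fin 3)

/-- The fundamental domain `[0,L]³` of the torus `T³`. -/
def box (L : ℝ) : Set E3 := {x | ∀ i, x i ∈ Set.Icc (0 : ℝ) L}

/-- The standard basis vector `e_i`. -/
def e3 (i : Fin 3) : E3 := EuclideanSpace.single i 1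

/-- `u` is `L`-periodic in each coordinate direction. -/
def Periodic3 (L : ℝ) {α : Type*} (u : E3 → α) : Prop :=
  ∀ (x : E3) (i : Fin 3), u (x + L • e3 i) = u x

/-- `|∇u|² = Σ_{i,j} (∂u_j/∂x_i)²`. -/
def gradNormSq (u : E3 → E3) (x : E3) : ℝ :=
  ∑ i, ∑ j, (fderiv ℝ u x (e3 i) j) ^ 2

/-- `|∇f|²` for a scalar function. -/
def gradNormSqScalar (f : E3 → ℝ) (x : E3) : ℝ :=
  ∑ i, (fderiv ℝ f x (e3 i)) ^ 2

/-- `u` is divergence free. -/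
def divFree (u : E3 → E3) : Prop := ∀ x, ∑ i, fderiv ℝ u x (e3 i) i = 0

/-- The Laplacian `Δu`. -/
def lap (u : E3 → E3) (x : E3) : E3 :=
  ∑ i, fderiv ℝ (fun y => fderiv ℝ u y (e3 i)) x (e3 i)

/-- The Navier–Stokes trilinear form `b(u,v,w) = ∫ (u·∇)v·w`. -/
def triB (L : ℝ) (u v w : E3 → E3) : ℝ :=
  ∫ x in box L, ∑ i, ∑ j, u x i * fderiv ℝ v x (e3 i) j * w x j

/-- The `L^p` norm over the fundamental domain (for a real exponent `p`). -/
def LpNorm (L p : ℝ) (u : E3 → E3) : ℝ := (∫ x in box L, ‖u x‖ ^ p) ^ (1 / p)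

/-- The square of the `V`-norm, `‖u‖_V² = ∫ |∇u|²`. -/
def VnormSq (L : ℝ) (u : E3 → E3) : ℝ := ∫ x in box L, gradNormSq u x

/-- The `V`-norm `‖u‖_V = ‖∇u‖_{L²}`. -/
def Vnorm (L : ℝ) (u : E3 → E3) : ℝ := Real.sqrt (VnormSq L u)


lemma isCompact_box (L : ℝ) : IsCompact (box L) := by
  have h : IsCompact ((Set.univ : Set (Fin 3)).pi fun _ => Set.Icc (0:ℝ) L) :=
    isCompact_univ_pi fun _ => isCompact_Icc
  have h2 := h.image (EuclideanSpace.equiv (Fin 3) ℝ).symm.continuous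
  convert h2 using 1
  ext x
  simp [box, Set.mem_image, Set.mem_pi, Pi.le_def, forall_and]
  constructor
  · intro h; exact ⟨x.ofLp, h, rfl⟩
  · rintro ⟨y, hy, rfl⟩; exact hy

lemma pointwise_key (μ β : ℝ) (hμ : 0 < μ) (hβ : 0 < β) (hcrit : 1 ≤ 2 * β * μ)
    (a b : E3) (D : Fin 3 → Fin 3 → ℝ) :
    0 ≤ μ * (∑ i, ∑ j, (D i j)^2)
      - (∑ i, ∑ j, (a i - b i) * D i j * b j)
      + β * (∑ j, (‖a‖^2 * a j - ‖b‖^2 * b j) * (a j - b j)) := by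
  have hna : ‖a‖^2 = ∑ j, (a j)^2 := by
    rw [EuclideanSpace.norm_eq, Real.sq_sqrt (by positivity)]
    simp [sq_abs]
  have hnb : ‖b‖^2 = ∑ j, (b j)^2 := by
    rw [EuclideanSpace.norm_eq, Real.sq_sqrt (by positivity)]
    simp [sq_abs]
  set G := ∑ i, ∑ j, (D i j)^2 with hGdef
  set W := ∑ i, (a i - b i)^2 with hWdef
  set sa := ∑ j, (a j)^2 with hsadef
  set sb := ∑ j, (b j)^2 with hsbdef
  set ip := ∑ j, a j * b j with hipdef
  set T := ∑ i, ∑ j, (a i - b i) * D i j * b j with hTdef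
  set C := ∑ j, (‖a‖^2 * a j - ‖b‖^2 * b j) * (a j - b j) with hCdef
  have hGnn : 0 ≤ G := Finset.sum_nonneg fun i _ => Finset.sum_nonneg fun j _ => sq_nonneg _
  have hWnn : 0 ≤ W := Finset.sum_nonneg fun i _ => sq_nonneg _
  have hsann : 0 ≤ sa := Finset.sum_nonneg fun j _ => sq_nonneg _
  have hsbnn : 0 ≤ sb := Finset.sum_nonneg fun j _ => sq_nonneg _
  have hWeq : W = sa - 2*ip + sb := by
    calc W = ∑ j, ((a j)^2 - 2*(a j * b j) + (b j)^2) :=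
          Finset.sum_congr rfl fun j _ => by ring
      _ = sa - 2*ip + sb := by
          rw [Finset.sum_add_distrib, Finset.sum_sub_distrib, ← Finset.mul_sum]
  have hCeq : C = sa*sa - sa*ip - sb*ip + sb*sb := by
    calc C = ∑ j, (sa * (a j)^2 - sa*(a j * b j) - sb*(a j * b j) + sb * (b j)^2) := by
          rw [hCdef]
          exact Finset.sum_congr rfl fun j _ => by rw [hna, hnb]; ring
      _ = sa*sa - sa*ip - sb*ip + sb*sb := by
          rw [Finset.sum_add_distrib, Finset.sum_sub_distrib, Finset.sum_sub_distrib,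
            ← Finset.mul_sum, ← Finset.mul_sum, ← Finset.mul_sum, ← Finset.mul_sum]
  have hC2 : sb * W ≤ 2 * C := by
    nlinarith [mul_nonneg hsann hWnn, sq_nonneg (sa - sb)]
  have hT2 : T^2 ≤ W * G * sb := by
    have h1 : T = ∑ j, (∑ i, (a i - b i) * D i j) * b j := by
      rw [hTdef, Finset.sum_comm]
      exact Finset.sum_congr rfl fun j _ => (Finset.sum_mul _ _ _).symm
    calc T^2 ≤ (∑ j, (∑ i, (a i - b i) * D i j)^2) * sb := by
          rw [h1]; exact Finset.sum_mul_sq_le_sq_mul_sq _ _ _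
      _ ≤ (∑ j, W * (∑ i, (D i j)^2)) * sb := by
          refine mul_le_mul_of_nonneg_right (Finset.sum_le_sum fun j _ => ?_) hsbnn
          exact Finset.sum_mul_sq_le_sq_mul_sq Finset.univ (fun i => a i - b i) (fun i => D i j)
      _ = W * (∑ j, ∑ i, (D i j)^2) * sb := by rw [← Finset.mul_sum]
      _ = W * G * sb := by rw [hGdef, Finset.sum_comm]
  have hTle : 2*β*T ≤ G + β^2*(W*sb) := by
    nlinarith [sq_nonneg (G - β^2*(W*sb)), mul_pos hβ hβ, hT2,
      mul_nonneg hGnn (mul_nonneg hWnn hsbnn),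
      mul_nonneg (mul_nonneg hβ.le hβ.le) (mul_nonneg hWnn hsbnn)]
  nlinarith [mul_nonneg (by linarith : (0:ℝ) ≤ 2*β*μ - 1) hGnn, hTle, hC2, hβ]

/-- For `r = 3` and `2βμ ≥ 1`, `G(u) = μAu + B(u) + βC(u)` is
globally monotone: `⟨G(u₁)-G(u₂), u₁-u₂⟩ ≥ 0`.  The pairing is expressed via
`⟨A(u₁-u₂),u₁-u₂⟩ = ‖u₁-u₂‖_V²`, `⟨B(u₁)-B(u₂),u₁-u₂⟩ = -b(u₁-u₂,u₁-u₂,u₂)`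
and the concrete `L^{4/3}`–`L⁴` pairing for `C(u) = P(|u|²u)`. -/
theorem stmt11 (L μ β : ℝ) (hL : 0 < L) (hμ : 0 < μ) (hβ : 0 < β)
    (hcrit : 1 ≤ 2 * β * μ)
    (u₁ u₂ : E3 → E3)
    (h1 : ContDiff ℝ (⊤ : ℕ∞) u₁) (h2 : ContDiff ℝ (⊤ : ℕ∞) u₂)
    (h1p : Periodic3 L u₁) (h2p : Periodic3 L u₂)
    (h1d : divFree u₁) (h2d : divFree u₂) :
    0 ≤ μ * VnormSq L (u₁ - u₂)
        - triB L (u₁ - u₂) (u₁ - u₂) u₂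
        + β * (∫ x in box L, ∑ j,
            (‖u₁ x‖ ^ 2 * u₁ x j - ‖u₂ x‖ ^ 2 * u₂ x j) * (u₁ x j - u₂ x j)) := by
  have hw : ContDiff ℝ (⊤ : ℕ∞) (u₁ - u₂) := h1.sub h2
  have hDc : Continuous fun x => fderiv ℝ (u₁ - u₂) x :=
    hw.continuous_fderiv (by simp)
  have hDij : ∀ (i j : Fin 3), Continuous fun x => fderiv ℝ (u₁ - u₂) x (e3 i) j := fun i j =>
    (EuclideanSpace.proj j).continuous.comp (hDc.clm_apply continuous_const)
  have hcg : Continuous (gradNormSq (u₁ - u₂)) := by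
    unfold gradNormSq
    exact continuous_finset_sum _ fun i _ => continuous_finset_sum _ fun j _ => (hDij i j).pow 2
  have h1j : ∀ j : Fin 3, Continuous fun x => u₁ x j := fun j =>
    (EuclideanSpace.proj j).continuous.comp h1.continuous
  have h2j : ∀ j : Fin 3, Continuous fun x => u₂ x j := fun j =>
    (EuclideanSpace.proj j).continuous.comp h2.continuous
  have hwj : ∀ j : Fin 3, Continuous fun x => (u₁ - u₂) x j := fun j =>
    (EuclideanSpace.proj j).continuous.comp hw.continuous
  have hct : Continuous fun x =>
      ∑ i, ∑ j, (u₁ - u₂) x i * fderiv ℝ (u₁ - u₂) x (e3 i) j * u₂ x j :=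
    continuous_finset_sum _ fun i _ => continuous_finset_sum _ fun j _ =>
      ((hwj i).mul (hDij i j)).mul (h2j j)
  have hcc : Continuous fun x =>
      ∑ j, (‖u₁ x‖^2 * u₁ x j - ‖u₂ x‖^2 * u₂ x j) * (u₁ x j - u₂ x j) :=
    continuous_finset_sum _ fun j _ =>
      (((h1.continuous.norm.pow 2).mul (h1j j)).sub
        ((h2.continuous.norm.pow 2).mul (h2j j))).mul ((h1j j).sub (h2j j))
  have hK := isCompact_box L
  have hmeas : MeasurableSet (box L) := hK.isClosed.measurableSet
  have hig : IntegrableOn (gradNormSq (u₁ - u₂)) (box L) :=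
    hcg.continuousOn.integrableOn_compact hK
  have hit : IntegrableOn (fun x =>
      ∑ i, ∑ j, (u₁ - u₂) x i * fderiv ℝ (u₁ - u₂) x (e3 i) j * u₂ x j) (box L) :=
    hct.continuousOn.integrableOn_compact hK
  have hic : IntegrableOn (fun x =>
      ∑ j, (‖u₁ x‖^2 * u₁ x j - ‖u₂ x‖^2 * u₂ x j) * (u₁ x j - u₂ x j)) (box L) :=
    hcc.continuousOn.integrableOn_compact hK
  rw [VnormSq, triB]
  have hsplit : μ * (∫ x in box L, gradNormSq (u₁ - u₂) x)
      - (∫ x in box L, ∑ i, ∑ j, (u₁ - u₂) x i * fderiv ℝ (u₁ - u₂) x (e3 i) j * u₂ x j)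
      + β * (∫ x in box L, ∑ j,
          (‖u₁ x‖^2 * u₁ x j - ‖u₂ x‖^2 * u₂ x j) * (u₁ x j - u₂ x j))
      = ∫ x in box L, (μ * gradNormSq (u₁ - u₂) x
          - ∑ i, ∑ j, (u₁ - u₂) x i * fderiv ℝ (u₁ - u₂) x (e3 i) j * u₂ x j
          + β * ∑ j, (‖u₁ x‖^2 * u₁ x j - ‖u₂ x‖^2 * u₂ x j) * (u₁ x j - u₂ x j)) := by
    have hInt1 : IntegrableOn (fun x => μ * gradNormSq (u₁ - u₂) x
        - ∑ i, ∑ j, (u₁ - u₂) x i * fderiv ℝ (u₁ - u₂) x (e3 i) j * u₂ x j) (box L) :=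
      (hig.const_mul μ).sub hit
    have hInt2 : IntegrableOn (fun x => β * ∑ j,
        (‖u₁ x‖^2 * u₁ x j - ‖u₂ x‖^2 * u₂ x j) * (u₁ x j - u₂ x j)) (box L) :=
      hic.const_mul β
    have hInt3 : IntegrableOn (fun x => μ * gradNormSq (u₁ - u₂) x) (box L) :=
      hig.const_mul μ
    rw [integral_add hInt1 hInt2, integral_sub hInt3 hit, integral_const_mul, integral_const_mul]
  rw [hsplit]
  refine setIntegral_nonneg hmeas fun x _ => ?_
  have := pointwise_key μ β hμ hβ hcrit (u₁ x) (u₂ x)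
    (fun i j => fderiv ℝ (u₁ - u₂) x (e3 i) j)
  simpa [gradNormSq, Pi.sub_apply, PiLp.sub_apply] using this
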